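/- Let 𝕜 be a field, n ≥ 1 an integer, and q ∈ 𝕜 banal for n (q ≠ 0 and qⁱ ≠ 1 for i = 1, …, n). Let a, b ∈ {1, …, n}. Then the 𝕜-linear map from M_{a×b}(𝕜) × M_{a×b}(𝕜) to M_{a×b}(𝕜) sending (Y, Z) to (Φ_a·Y − q·Y·Φ_b) + (Z·N_b − q·N_a·Z) is surjective; equivalently, its kernel has dimension a·b over 𝕜. -/

import Mathlib

open Matrix

/-- The diagonal matrix `Φ_d = diag(q^{d-1}, q^{d-2}, …, q, 1)`. -/
noncomputable def banalPhi (𝕜 : Type*) [Field 𝕜] (q : 𝕜) (d : ℕ) :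
    Matrix (Fin d) (Fin d) 𝕜 :=
  Matrix.diagonal fun i => q ^ (d - 1 - (i : ℕ))

/-- The nilpotent `d × d` Jordan block `N_d` with ones on the superdiagonal. -/
def jordanN (𝕜 : Type*) [Field 𝕜] (d : ℕ) : Matrix (Fin d) (Fin d) 𝕜 :=
  Matrix.of fun i j => if (i : ℕ) + 1 = (j : ℕ) then 1 else 0

section Aux
set_option linter.unnecessarySeqFocus false

variable {𝕜 : Type*} [Field 𝕜] {q : 𝕜} {a b : ℕ}

lemma std_mul_jordan (r : Fin a) (c : Fin b) (v : 𝕜) (x : Fin a) (y : Fin b) :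
    (Matrix.single r c v * jordanN 𝕜 b) x y
      = if x = r ∧ (c : ℕ) + 1 = (y : ℕ) then v else 0 := by
  rw [Matrix.mul_apply]
  simp only [jordanN, Matrix.of_apply, Matrix.single, mul_ite, mul_one, mul_zero]
  rw [Finset.sum_eq_single c]
  · by_cases h1 : x = r <;> by_cases h2 : (c:ℕ)+1 = (y:ℕ) <;>
      simp [h1, h2] <;> aesop
  · intro k _ hk
    simp [Ne.symm hk]
  · simp

lemma jordan_mul_std (r : Fin a) (c : Fin b) (v : 𝕜) (x : Fin a) (y : Fin b) :
    (jordanN 𝕜 a * Matrix.single r c v) x y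
      = if (x : ℕ) + 1 = (r : ℕ) ∧ y = c then v else 0 := by
  rw [Matrix.mul_apply]
  simp only [jordanN, Matrix.of_apply, Matrix.single, ite_mul, one_mul, zero_mul]
  rw [Finset.sum_eq_single r]
  · by_cases h1 : (x:ℕ)+1 = (r:ℕ) <;> by_cases h2 : y = c <;>
      simp [h1, h2] <;> aesop
  · intro k _ hk
    simp [Ne.symm hk]
  · simp

lemma phi_mul_std (r : Fin a) (c : Fin b) (v : 𝕜) (x : Fin a) (y : Fin b) :
    (banalPhi 𝕜 q a * Matrix.single r c v) x y
      = if x = r ∧ y = c then q ^ (a - 1 - (r:ℕ)) * v else 0 := by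
  rw [banalPhi, Matrix.diagonal_mul]
  by_cases h1 : x = r <;> by_cases h2 : y = c <;>
    simp [Matrix.single, h1, h2] <;> aesop

lemma std_mul_phi (r : Fin a) (c : Fin b) (v : 𝕜) (x : Fin a) (y : Fin b) :
    (Matrix.single r c v * banalPhi 𝕜 q b) x y
      = if x = r ∧ y = c then v * q ^ (b - 1 - (c:ℕ)) else 0 := by
  rw [banalPhi, Matrix.mul_diagonal]
  by_cases h1 : x = r <;> by_cases h2 : y = c <;>
    simp [Matrix.single, h1, h2] <;> aesop

lemma F_first (i : Fin a) (j : Fin b) (v : 𝕜) :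
    banalPhi 𝕜 q a * Matrix.single i j v - q • (Matrix.single i j v * banalPhi 𝕜 q b)
      = Matrix.single i j ((q ^ (a - 1 - (i:ℕ)) - q * q ^ (b - 1 - (j:ℕ))) * v) := by
  ext x y
  simp only [Matrix.sub_apply, Matrix.smul_apply, phi_mul_std, std_mul_phi, smul_eq_mul]
  by_cases h1 : x = i <;> by_cases h2 : y = j
  · subst h1; subst h2; simp [Matrix.single]; ring
  · subst h1; simp [Matrix.single, Ne.symm h2, h2]
  · subst h2; simp [Matrix.single, Ne.symm h1, h1]
  · simp [Matrix.single, Ne.symm h1, h1, h2]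

lemma F_second (r : Fin a) (c : Fin b) (v : 𝕜) :
    Matrix.single r c v * jordanN 𝕜 b - q • (jordanN 𝕜 a * Matrix.single r c v)
      = Matrix.of (fun (x : Fin a) (y : Fin b) =>
          (if x = r ∧ (c:ℕ) + 1 = (y:ℕ) then v else 0)
            - q * (if (x:ℕ) + 1 = (r:ℕ) ∧ y = c then v else 0)) := by
  ext x y
  simp [std_mul_jordan, jordan_mul_std]

/-- The map as a linear map. -/
noncomputable def banalF (𝕜 : Type*) [Field 𝕜] (q : 𝕜) (a b : ℕ) :
    (Matrix (Fin a) (Fin b) 𝕜 × Matrix (Fin a) (Fin b) 𝕜) →ₗ[𝕜]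
      Matrix (Fin a) (Fin b) 𝕜 where
  toFun p := (banalPhi 𝕜 q a * p.1 - q • (p.1 * banalPhi 𝕜 q b))
      + (p.2 * jordanN 𝕜 b - q • (jordanN 𝕜 a * p.2))
  map_add' p r := by
    simp only [Prod.fst_add, Prod.snd_add, Matrix.mul_add, Matrix.add_mul, smul_add]
    abel
  map_smul' c p := by
    simp only [Prod.smul_fst, Prod.smul_snd, Matrix.mul_smul, Matrix.smul_mul,
      smul_sub, smul_add, RingHom.id_apply]
    rw [smul_comm c q, smul_comm c q]

end Aux

/-- If `q` is banal for `n` in the field `𝕜` and `1 ≤ a, b ≤ n`, then the `𝕜`-linear map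
`(Y, Z) ↦ (Φ_a·Y − q·Y·Φ_b) + (Z·N_b − q·N_a·Z)` on pairs of `a × b` matrices is surjective,
and (equivalently) its kernel has dimension `a * b` over `𝕜`. -/
theorem banal_matrix_map_surjective
    (𝕜 : Type*) [Field 𝕜] (n : ℕ) (hn : 1 ≤ n) (q : 𝕜) (hq0 : q ≠ 0)
    (hq : ∀ i : ℕ, 1 ≤ i → i ≤ n → q ^ i ≠ 1)
    (a b : ℕ) (ha1 : 1 ≤ a) (han : a ≤ n) (hb1 : 1 ≤ b) (hbn : b ≤ n) :
    Function.Surjective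
      (fun p : Matrix (Fin a) (Fin b) 𝕜 × Matrix (Fin a) (Fin b) 𝕜 =>
        (banalPhi 𝕜 q a * p.1 - q • (p.1 * banalPhi 𝕜 q b))
          + (p.2 * jordanN 𝕜 b - q • (jordanN 𝕜 a * p.2))) ∧
    ∀ L : (Matrix (Fin a) (Fin b) 𝕜 × Matrix (Fin a) (Fin b) 𝕜) →ₗ[𝕜]
        Matrix (Fin a) (Fin b) 𝕜,
      (∀ p : Matrix (Fin a) (Fin b) 𝕜 × Matrix (Fin a) (Fin b) 𝕜,
        L p = (banalPhi 𝕜 q a * p.1 - q • (p.1 * banalPhi 𝕜 q b))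
          + (p.2 * jordanN 𝕜 b - q • (jordanN 𝕜 a * p.2))) →
      Module.finrank 𝕜 (LinearMap.ker L) = a * b := by
  set F := banalF 𝕜 q a b with hF
  -- injectivity of powers up to n
  have hpowinj : ∀ s t : ℕ, s ≤ n → t ≤ n → q ^ s = q ^ t → s = t := by
    intro s t hs ht h
    by_contra hne
    rcases Nat.lt_or_ge s t with hlt | hge
    · have : q ^ s * q ^ (t - s) = q ^ s * 1 := by
        rw [mul_one, ← pow_add]
        rw [h]
        congr 1
        omega
      have h1 := mul_left_cancel₀ (pow_ne_zero s hq0) this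
      exact hq (t - s) (by omega) (by omega) h1
    · have hlt : t < s := by omega
      have : q ^ t * q ^ (s - t) = q ^ t * 1 := by
        rw [mul_one, ← pow_add]
        rw [← h]
        congr 1
        omega
      have h1 := mul_left_cancel₀ (pow_ne_zero t hq0) this
      exact hq (s - t) (by omega) (by omega) h1
  -- every standard basis matrix is in the range of F
  have hcrit : ∀ s : ℕ, ∀ (i : Fin a) (j : Fin b),
      a - 1 - (i:ℕ) = s → b - (j:ℕ) = s →
      Matrix.single i j (1 : 𝕜) ∈ LinearMap.range F := by
    intro s
    induction s with
    | zero => intro i j _ hj; exact absurd hj (by omega)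
    | succ s ih =>
      intro i j hi hj
      have hi1 : (i:ℕ) + 1 < a := by omega
      set r : Fin a := ⟨(i:ℕ) + 1, hi1⟩ with hr
      have hFZ : F (0, Matrix.single r j (1:𝕜))
          = Matrix.of (fun (x : Fin a) (y : Fin b) =>
              (if x = r ∧ (j:ℕ) + 1 = (y:ℕ) then (1:𝕜) else 0)
                - q * (if (x:ℕ) + 1 = (r:ℕ) ∧ y = j then 1 else 0)) := by
        show (banalPhi 𝕜 q a * (0 : Matrix (Fin a) (Fin b) 𝕜) - q • ((0 : Matrix (Fin a) (Fin b) 𝕜) * banalPhi 𝕜 q b))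
            + (Matrix.single r j (1:𝕜) * jordanN 𝕜 b
              - q • (jordanN 𝕜 a * Matrix.single r j (1:𝕜))) = _
        rw [F_second]
        simp
      by_cases hs : s = 0
      · -- j is the last column; F(0,Z) = -q • E i j
        subst hs
        have hjb : (j:ℕ) + 1 = b := by omega
        have hkey : F (0, Matrix.single r j (1:𝕜)) = (-q) • Matrix.single i j (1:𝕜) := by
          rw [hFZ]
          ext x y
          have hy := y.isLt
          simp only [Matrix.of_apply, Matrix.smul_apply, smul_eq_mul,
            Matrix.single, hr, Fin.ext_iff, Fin.val_mk]
          split_ifs <;> first | ring1 | (exfalso; omega)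
        have : Matrix.single i j (1:𝕜) = (-q)⁻¹ • F (0, Matrix.single r j (1:𝕜)) := by
          rw [hkey, smul_smul, inv_mul_cancel₀ (by simpa using hq0), one_smul]
        rw [this]
        exact Submodule.smul_mem _ _ (LinearMap.mem_range_self F _)
      · -- there is a next critical position (r, j')
        have hj1 : (j:ℕ) + 1 < b := by omega
        set j' : Fin b := ⟨(j:ℕ) + 1, hj1⟩ with hj'
        have hkey : F (0, Matrix.single r j (1:𝕜))
            = Matrix.single r j' (1:𝕜) - q • Matrix.single i j (1:𝕜) := by
          rw [hFZ]
          ext x y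
          simp only [Matrix.of_apply, Matrix.sub_apply, Matrix.smul_apply, smul_eq_mul,
            Matrix.single, hr, hj', Fin.ext_iff, Fin.val_mk]
          split_ifs <;> first | ring1 | (exfalso; omega)
        have hmem' : Matrix.single r j' (1:𝕜) ∈ LinearMap.range F :=
          ih r j' (by simp [hr]; omega) (by simp [hj']; omega)
        have : Matrix.single i j (1:𝕜)
            = q⁻¹ • (Matrix.single r j' (1:𝕜) - F (0, Matrix.single r j (1:𝕜))) := by
          rw [hkey]
          rw [sub_sub_cancel, smul_smul, inv_mul_cancel₀ hq0, one_smul]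
        rw [this]
        exact Submodule.smul_mem _ _
          (Submodule.sub_mem _ hmem' (LinearMap.mem_range_self F _))
  have hE : ∀ (i : Fin a) (j : Fin b),
      Matrix.single i j (1 : 𝕜) ∈ LinearMap.range F := by
    intro i j
    by_cases hc : a - 1 - (i:ℕ) = b - (j:ℕ)
    · exact hcrit (b - (j:ℕ)) i j (by omega) rfl
    · -- noncritical: use the Y component
      set c : 𝕜 := q ^ (a - 1 - (i:ℕ)) - q * q ^ (b - 1 - (j:ℕ)) with hcdef
      have hqq : q * q ^ (b - 1 - (j:ℕ)) = q ^ (b - (j:ℕ)) := by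
        rw [← pow_succ']
        congr 1
        omega
      have hc0 : c ≠ 0 := by
        rw [hcdef, hqq]
        refine sub_ne_zero_of_ne fun h => hc ?_
        exact hpowinj _ _ (by omega) (by omega) h
      have hkey : F (Matrix.single i j c⁻¹, 0) = Matrix.single i j (1:𝕜) := by
        show (banalPhi 𝕜 q a * Matrix.single i j c⁻¹
            - q • (Matrix.single i j c⁻¹ * banalPhi 𝕜 q b))
          + ((0 : Matrix (Fin a) (Fin b) 𝕜) * jordanN 𝕜 b
            - q • (jordanN 𝕜 a * (0 : Matrix (Fin a) (Fin b) 𝕜))) = _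
        rw [F_first]
        simp only [Matrix.zero_mul, Matrix.mul_zero, smul_zero, sub_zero, add_zero]
        rw [← hcdef, mul_inv_cancel₀ hc0]
      exact ⟨_, hkey⟩
  have hsurjF : Function.Surjective F := by
    intro T
    have hmem : T ∈ LinearMap.range F := by
      rw [Matrix.matrix_eq_sum_single T]
      refine Submodule.sum_mem _ fun i _ => Submodule.sum_mem _ fun j _ => ?_
      have h1 : Matrix.single i j (T i j) = T i j • Matrix.single i j (1:𝕜) := by
        rw [Matrix.smul_single, smul_eq_mul, mul_one]
      rw [h1]
      exact Submodule.smul_mem _ _ (hE i j)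
    exact hmem
  constructor
  · exact hsurjF
  · intro L hL
    have hLF : L = F := LinearMap.ext fun p => (hL p).trans rfl
    have hrange : LinearMap.range L = ⊤ := LinearMap.range_eq_top.mpr (hLF ▸ hsurjF)
    have h1 := LinearMap.finrank_range_add_finrank_ker L
    rw [hrange, finrank_top] at h1
    have hM : Module.finrank 𝕜 (Matrix (Fin a) (Fin b) 𝕜) = a * b := by
      simp [Module.finrank_matrix]
    rw [Module.finrank_prod, hM] at h1
    omega
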